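/- For real numbers m, p, k with m > 0, p > 0, p > k > -m, if k(p - m - k) ≤ 0 then Γ(p)Γ(m) ≤ Γ(p-k)Γ(m+k). -/

import Mathlib

open Real Set

lemma convex_pair_aux (f : ℝ → ℝ) (hf : ConvexOn ℝ (Set.Ioi 0) f)
    (a b c d : ℝ) (hc : 0 < c) (hca : c ≤ a) (had : a ≤ d) (hcb : c ≤ b)
    (hsum : a + b = c + d) : f a + f b ≤ f c + f d := by
  rcases eq_or_lt_of_le (hca.trans had) with hcd | hcd
  · have ha : a = c := le_antisymm (by linarith) hca
    have hb : b = d := by linarith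
    rw [ha, hb]
  · set t : ℝ := (d - a) / (d - c) with ht
    have hdc : 0 < d - c := by linarith
    have ht0 : 0 ≤ t := div_nonneg (by linarith) hdc.le
    have ht1 : t ≤ 1 := by
      rw [div_le_one hdc]; linarith
    have ha_eq : a = t * c + (1 - t) * d := by
      have key : t * (d - c) = d - a := by rw [ht]; field_simp
      linear_combination key
    have hb_eq : b = (1 - t) * c + t * d := by
      have : b = c + d - a := by linarith
      rw [this, ha_eq]; ring
    have hcmem : c ∈ Set.Ioi (0:ℝ) := hc
    have hdmem : d ∈ Set.Ioi (0:ℝ) := lt_of_lt_of_le hc hcd.le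
    have ht0' : (0:ℝ) ≤ 1 - t := by linarith
    have hts : t + (1 - t) = 1 := by ring
    have hts' : (1 - t) + t = 1 := by ring
    have h1 := hf.2 hcmem hdmem ht0 ht0' hts
    have h2 := hf.2 hcmem hdmem ht0' ht0 hts'
    simp only [smul_eq_mul] at h1 h2
    rw [ha_eq, hb_eq]
    calc f (t * c + (1 - t) * d) + f ((1 - t) * c + t * d)
        ≤ (t * f c + (1 - t) * f d) + ((1 - t) * f c + t * f d) := add_le_add h1 h2
      _ = f c + f d := by ring

theorem gamma_ineq_le (m p k : ℝ) (hm : 0 < m) (hp : 0 < p)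
    (hpk : k < p) (hkm : -m < k) (h : k * (p - m - k) ≤ 0) :
    Real.Gamma p * Real.Gamma m ≤ Real.Gamma (p - k) * Real.Gamma (m + k) := by
  have hpk' : 0 < p - k := by linarith
  have hmk' : 0 < m + k := by linarith
  have gp := Real.Gamma_pos_of_pos hp
  have gm := Real.Gamma_pos_of_pos hm
  have gpk := Real.Gamma_pos_of_pos hpk'
  have gmk := Real.Gamma_pos_of_pos hmk'
  have key : Real.log (Real.Gamma p) + Real.log (Real.Gamma m) ≤
      Real.log (Real.Gamma (p - k)) + Real.log (Real.Gamma (m + k)) := by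
    have hf := Real.convexOn_log_Gamma
    rcases lt_trichotomy k 0 with hk | hk | hk
    · have hpm : m ≤ p - k := by nlinarith
      have H := convex_pair_aux (fun x => Real.log (Real.Gamma x)) hf
        m p (m + k) (p - k) hmk' (by linarith) hpm (by linarith) (by ring)
      linarith
    · subst hk; simp
    · have hpm : p ≤ m + k := by nlinarith
      have H := convex_pair_aux (fun x => Real.log (Real.Gamma x)) hf
        p m (p - k) (m + k) hpk' (by linarith) hpm (by linarith) (by ring)
      linarith
  calc Real.Gamma p * Real.Gamma m
      = Real.exp (Real.log (Real.Gamma p) + Real.log (Real.Gamma m)) := by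
        rw [Real.exp_add, Real.exp_log gp, Real.exp_log gm]
    _ ≤ Real.exp (Real.log (Real.Gamma (p-k)) + Real.log (Real.Gamma (m+k))) :=
        Real.exp_le_exp.mpr key
    _ = Real.Gamma (p - k) * Real.Gamma (m + k) := by
        rw [Real.exp_add, Real.exp_log gpk, Real.exp_log gmk]
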